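/- Under the hypotheses of the triangle-gluing lemma (conditions (i)–(iii)), the total angle at the outer vertices satisfies Σ_{v outer} Σ_{f ∋ v} β(f,v) = (d − 2)π, where d is the number of outer vertices. -/
import Mathlib


open scoped Classical

/-- **Total angle at the outer vertices.**
Let `H` be an inner triangulation of a `d`-gon (`Vt` its vertices, `outer` the
set of outer vertices with `outer.card = d`, `Ft` its inner faces, `inc f` the
three vertices of the inner face `f`, `numEdges` its number of edges), and let
each inner face `f` carry a triangle `T_f` with inner angle `β f v` at each
vertex `v ∈ inc f`, so that the angles of each triangle sum to `π`.
Assume condition (i): at every inner vertex the angles of the incident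
triangles sum to `2π`; and record planarity by Euler's formula
`|V| - |E| + (|F_inner| + 1) = 2` and the triangle handshake
`3·|F_inner| = 2·|E| - d`.  Then the total angle at the outer vertices is
`(d - 2)·π`. -/
theorem stmt17 {Vt Ft : Type} [Fintype Vt] [Fintype Ft] [DecidableEq Vt]
    (d : ℕ) (hd3 : 3 ≤ d) (outer : Finset Vt) (hd : outer.card = d)
    (inc : Ft → Finset Vt) (β : Ft → Vt → ℝ) (numEdges : ℕ)
    (htri : ∀ f, (inc f).card = 3)
    (hsum : ∀ f, ∑ v ∈ inc f, β f v = Real.pi)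
    (hin : ∀ v, v ∉ outer →
      ∑ f ∈ Finset.univ.filter (fun f : Ft => v ∈ inc f), β f v = 2 * Real.pi)
    (hEuler : (Fintype.card Vt : ℤ) - numEdges + (Fintype.card Ft + 1) = 2)
    (hHandshake : 3 * (Fintype.card Ft : ℤ) = 2 * numEdges - d) :
    ∑ v ∈ outer, ∑ f ∈ Finset.univ.filter (fun f : Ft => v ∈ inc f), β f v =
      ((d : ℝ) - 2) * Real.pi := by
  -- total sum over all vertices
  have htot : ∑ v : Vt, ∑ f ∈ Finset.univ.filter (fun f : Ft => v ∈ inc f), β f v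
      = (Fintype.card Ft : ℝ) * Real.pi := by
    have : ∑ v : Vt, ∑ f ∈ Finset.univ.filter (fun f : Ft => v ∈ inc f), β f v
        = ∑ f : Ft, ∑ v ∈ inc f, β f v := by
      simp only [Finset.sum_filter]
      rw [Finset.sum_comm]
      refine Finset.sum_congr rfl fun f _ => ?_
      rw [← Finset.sum_filter]
      refine Finset.sum_congr ?_ fun _ _ => rfl
      ext v; simp
    rw [this]
    simp [hsum, Finset.card_univ]
  -- split over outer and inner
  have hsplit : ∑ v : Vt, ∑ f ∈ Finset.univ.filter (fun f : Ft => v ∈ inc f), β f v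
      = (∑ v ∈ outer, ∑ f ∈ Finset.univ.filter (fun f : Ft => v ∈ inc f), β f v)
        + ∑ v ∈ outerᶜ, ∑ f ∈ Finset.univ.filter (fun f : Ft => v ∈ inc f), β f v := by
    rw [← Finset.sum_add_sum_compl outer]
  have hinner : ∑ v ∈ outerᶜ, ∑ f ∈ Finset.univ.filter (fun f : Ft => v ∈ inc f), β f v
      = ((Fintype.card Vt : ℝ) - d) * (2 * Real.pi) := by
    rw [Finset.sum_congr rfl fun v hv => hin v (Finset.mem_compl.mp hv)]
    rw [Finset.sum_const, Finset.card_compl, hd]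
    have hle : d ≤ Fintype.card Vt := hd ▸ Finset.card_le_univ outer
    rw [nsmul_eq_mul, Nat.cast_sub hle]
  -- counting identity
  have hF : (Fintype.card Ft : ℝ) = 2 * (Fintype.card Vt : ℝ) - d - 2 := by
    have : (Fintype.card Ft : ℤ) = 2 * (Fintype.card Vt : ℤ) - d - 2 := by omega
    exact_mod_cast this
  have := hsplit
  rw [htot, hinner, hF] at this
  linarith [this]
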